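/- Let M > 1, n ≥ 1 a natural number, v ≥ 0 with (n−1)·M·v ≤ (M−1)·n, and let α* ∈ [1/M, 1) be a root of the cubic h(α) = (M−1)Mnα³ − (M+1)(M−2)nα² − (4n+(M−1)(n−1)v)α + 2n. Then there exists a unique real number β* in the open interval (α*/M, (M+1)/(2M)) such that q(β*) = 0, where q is the quadratic in β with coefficients depending on (M, n, v, α*) given by q(β) = Mn((M−1)²n + (M+1)²(n−1)v)((M−1)α* + (M+1))β² + 2M[2(M−1)Mn((n−1)v − n)(α*)² + (M+1)((n−1)v − n)((3−M)n + (M−1)(n−1)v)α* + n(n − (M−4)Mn − (M+1)(M+3)(n−1)v)]β + [−2M(M²−1)n((n−1)v − n)(α*)² + (2(2+M+2M²−M³)n² + (M−3)(M+1)²(n−1)nv − (M−1)(M+1)²(n−1)²v²)α* + 2(M+1)²n((n−1)v − n)]. -/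
import Mathlib

/-- The cubic `h(α)` from the two-step stochastic stepsize schedule analysis. -/
noncomputable def hcub (M n v α : ℝ) : ℝ :=
  (M - 1) * M * n * α ^ 3 - (M + 1) * (M - 2) * n * α ^ 2
    - (4 * n + (M - 1) * (n - 1) * v) * α + 2 * n

/-- The quadratic `q(β)` (in `β`, with parameters `M, n, v, α`) from the
two-step stochastic stepsize schedule analysis. -/
noncomputable def qquad (M n v α β : ℝ) : ℝ :=
  M * n * ((M - 1) ^ 2 * n + (M + 1) ^ 2 * (n - 1) * v) * ((M - 1) * α + (M + 1)) * β ^ 2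
  + 2 * M * (2 * (M - 1) * M * n * ((n - 1) * v - n) * α ^ 2
      + (M + 1) * ((n - 1) * v - n) * ((3 - M) * n + (M - 1) * (n - 1) * v) * α
      + n * (n - (M - 4) * M * n - (M + 1) * (M + 3) * (n - 1) * v)) * β
  + (-2 * M * (M ^ 2 - 1) * n * ((n - 1) * v - n) * α ^ 2
      + (2 * (2 + M + 2 * M ^ 2 - M ^ 3) * n ^ 2 + (M - 3) * (M + 1) ^ 2 * (n - 1) * n * v
          - (M - 1) * (M + 1) ^ 2 * (n - 1) ^ 2 * v ^ 2) * α
      + 2 * (M + 1) ^ 2 * n * ((n - 1) * v - n))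

/-- Auxiliary polynomial controlling the sign of `q` at the left endpoint. -/
noncomputable def Tme (m e : ℝ) : ℝ :=
  16*e^2 + 8*m*e + 72*m*e^2 + (-16)*m*e^3 + 24*m^2*e + 136*m^2*e^2 + (-72)*m^2*e^3 + 4*m^2*e^4 + (-2)*m^3 + 38*m^3*e + 140*m^3*e^2 + (-134)*m^3*e^3 + 18*m^3*e^4 + (-4)*m^4 + 46*m^4*e + 76*m^4*e^2 + (-132)*m^4*e^3 + 32*m^4*e^4 + (-4)*m^5 + 42*m^5*e + 6*m^5*e^2 + (-70)*m^5*e^3 + 28*m^5*e^4 + (-3)*m^6 + 26*m^6*e + (-20)*m^6*e^2 + (-15)*m^6*e^3 + 12*m^6*e^4 + (-1)*m^7 + 9*m^7*e + (-12)*m^7*e^2 + 2*m^7*e^3 + 2*m^7*e^4 + 1*m^8*e + (-2)*m^8*e^2 + 1*m^8*e^3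

lemma Tpos (m e : ℝ) (hm : 0 < m) (he : 0 < e) (hc : 0 ≤ m - e - m*e)
    (hp : 0 ≤ 2*e*(1+m+m^2) - m*(1+m)*(1+e^2)) : 0 < Tme m e := by
  simp only [Tme]
  linarith [mul_nonneg hp (show (0:ℝ) ≤ m^0*e^1 by positivity),
    mul_nonneg hp (show (0:ℝ) ≤ m^1*e^0 by positivity),
    mul_nonneg hc (show (0:ℝ) ≤ m^1*e^0 by positivity),
    mul_nonneg hp (show (0:ℝ) ≤ m^1*e^1 by positivity),
    mul_nonneg hc (show (0:ℝ) ≤ m^1*e^1 by positivity),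
    mul_nonneg hp (show (0:ℝ) ≤ m^1*e^2 by positivity),
    mul_nonneg hc (show (0:ℝ) ≤ m^1*e^2 by positivity),
    mul_nonneg hp (show (0:ℝ) ≤ m^2*e^0 by positivity),
    mul_nonneg hc (show (0:ℝ) ≤ m^2*e^0 by positivity),
    mul_nonneg hc (show (0:ℝ) ≤ m^2*e^1 by positivity),
    mul_nonneg hp (show (0:ℝ) ≤ m^2*e^2 by positivity),
    mul_nonneg hc (show (0:ℝ) ≤ m^2*e^2 by positivity),
    mul_nonneg hp (show (0:ℝ) ≤ m^2*e^3 by positivity),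
    mul_nonneg hc (show (0:ℝ) ≤ m^2*e^3 by positivity),
    mul_nonneg hp (show (0:ℝ) ≤ m^3*e^0 by positivity),
    mul_nonneg hc (show (0:ℝ) ≤ m^3*e^0 by positivity),
    mul_nonneg hp (show (0:ℝ) ≤ m^3*e^1 by positivity),
    mul_nonneg hp (show (0:ℝ) ≤ m^3*e^3 by positivity),
    mul_nonneg hc (show (0:ℝ) ≤ m^4*e^0 by positivity),
    mul_nonneg hp (show (0:ℝ) ≤ m^4*e^1 by positivity),
    mul_nonneg hp (show (0:ℝ) ≤ m^4*e^2 by positivity),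
    mul_nonneg hc (show (0:ℝ) ≤ m^4*e^2 by positivity),
    mul_nonneg hp (show (0:ℝ) ≤ m^4*e^3 by positivity),
    mul_nonneg hc (show (0:ℝ) ≤ m^4*e^3 by positivity),
    mul_nonneg hc (show (0:ℝ) ≤ m^5*e^0 by positivity),
    mul_nonneg hc (show (0:ℝ) ≤ m^6*e^0 by positivity),
    mul_nonneg (mul_nonneg hc hc) (show (0:ℝ) ≤ m^2*e^0 by positivity),
    mul_nonneg (mul_nonneg hp hp) (show (0:ℝ) ≤ m^2*e^0 by positivity),
    mul_nonneg (mul_nonneg hp hc) (show (0:ℝ) ≤ m^3*e^0 by positivity),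
    mul_nonneg (mul_nonneg hp hp) (show (0:ℝ) ≤ m^3*e^0 by positivity),
    mul_nonneg (mul_nonneg hp hc) (show (0:ℝ) ≤ m^4*e^0 by positivity),
    mul_nonneg (mul_nonneg hp hc) (show (0:ℝ) ≤ m^5*e^0 by positivity),
    mul_nonneg (mul_nonneg hc hc) (show (0:ℝ) ≤ m^5*e^0 by positivity),
    mul_nonneg (mul_nonneg hc hc) (show (0:ℝ) ≤ m^6*e^0 by positivity),
    show (0:ℝ) ≤ m^4*e^1 by positivity,
    show (0:ℝ) ≤ m^3*e^5 by positivity,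
    show (0:ℝ) ≤ m^4*e^5 by positivity,
    show (0:ℝ) ≤ m^5*e^5 by positivity,
    show (0:ℝ) ≤ m^6*e^5 by positivity,
    mul_pos hm he]

set_option maxHeartbeats 1000000 in
theorem stmt_1 (M : ℝ) (n : ℕ) (v : ℝ)
    (hM : 1 < M) (hn : 1 ≤ n) (hv : 0 ≤ v)
    (hbound : ((n : ℝ) - 1) * M * v ≤ (M - 1) * n)
    (α : ℝ) (hα : α ∈ Set.Ico (1 / M) 1) (hroot : hcub M (n : ℝ) v α = 0) :
    ∃! β : ℝ, β ∈ Set.Ioo (α / M) ((M + 1) / (2 * M)) ∧ qquad M (n : ℝ) v α β = 0 := by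
  obtain ⟨hα1, hα2⟩ := hα
  have hM0 : (0:ℝ) < M := by linarith
  have hMne : M ≠ 0 := ne_of_gt hM0
  have hn1 : (1:ℝ) ≤ (n:ℝ) := by exact_mod_cast hn
  have hnpos : (0:ℝ) < (n:ℝ) := by linarith
  have hα0 : 0 < α := lt_of_lt_of_le (by positivity) hα1
  have hMα : 1 ≤ M * α := by
    rw [div_le_iff₀ hM0] at hα1; linarith
  have hM1 : (0:ℝ) < M - 1 := by linarith
  have hroot' : (M-1)*M*(n:ℝ)*α^3 - (M+1)*(M-2)*(n:ℝ)*α^2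
      - (4*(n:ℝ)+(M-1)*((n:ℝ)-1)*v)*α + 2*(n:ℝ) = 0 := by
    unfold hcub at hroot
    linear_combination hroot
  set L := α / M with hLdef
  set B := (M + 1) / (2 * M) with hBdef
  have hMl : M * L = α := by rw [hLdef]; field_simp
  have hB : 2 * M * B = M + 1 := by rw [hBdef]; field_simp
  have hLB : L < B := by
    rw [hLdef, hBdef, div_lt_div_iff₀ hM0 (by positivity)]
    nlinarith
  -- the cubic gives an expression for (M-1)(n-1)vα
  have hkey : (M-1)*((n:ℝ)-1)*v*α = (n:ℝ)*((M-1)*M*α^3 - (M+1)*(M-2)*α^2 - 4*α + 2) := by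
    linear_combination -hroot'
  have hkeynn : 0 ≤ (M-1)*((n:ℝ)-1)*v*α :=
    mul_nonneg (mul_nonneg (mul_nonneg (by linarith) (by linarith)) hv) hα0.le
  have hPge : 0 ≤ (M-1)*M*α^3 - (M+1)*(M-2)*α^2 - 4*α + 2 := by
    by_contra hneg
    push_neg at hneg
    nlinarith [mul_pos hnpos (neg_pos.mpr hneg)]
  have hp' : 0 ≤ 2*(1-α)*(1+(M-1)+(M-1)^2) - (M-1)*(1+(M-1))*(1+(1-α)^2) := by
    by_contra hneg
    push_neg at hneg
    nlinarith [mul_pos (show (0:ℝ) < 1 - α by linarith) (neg_pos.mpr hneg)]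
  have hT : 0 < Tme (M-1) (1-α) :=
    Tpos (M-1) (1-α) (by linarith) (by linarith) (by nlinarith) hp'
  -- sign at the left endpoint
  have eqL : (M-1)^3*M^3*(n:ℝ)*α^2 * qquad M (n:ℝ) v α L
      = M*(M-1)^2*(n:ℝ)^3*α^3*(α-1) * Tme (M-1) (1-α) := by
    simp only [qquad, Tme]
    linear_combination ((-1)*M^2*(n:ℝ)^2*α^3 + 1*M^2*(n:ℝ)^2*α^4 + 1*M^3*(n:ℝ)*v*α^2 + (-2)*M^3*(n:ℝ)*v*α^3 + 1*M^3*(n:ℝ)^2*α^2 + 1*M^3*(n:ℝ)^2*α^3 + (-5)*M^3*(n:ℝ)^2*α^4 + (-1)*M^3*(n:ℝ)^2*v*α^2 + 2*M^3*(n:ℝ)^2*v*α^3 + (-1)*M^4*(n:ℝ)*v*α^2 + 4*M^4*(n:ℝ)*v*α^3 + (-1)*M^4*(n:ℝ)^2*α^2 + 5*M^4*(n:ℝ)^2*α^3 + 3*M^4*(n:ℝ)^2*α^4 + 2*M^4*(n:ℝ)^2*α^5 + 1*M^4*(n:ℝ)^2*v*α^2 + (-4)*M^4*(n:ℝ)^2*v*α^3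 + (-2)*M^5*(n:ℝ)*v*α^2 + (-2)*M^5*(n:ℝ)^2*α^2 + (-3)*M^5*(n:ℝ)^2*α^3 + (-1)*M^5*(n:ℝ)^2*α^4 + (-4)*M^5*(n:ℝ)^2*α^5 + 2*M^5*(n:ℝ)^2*v*α^2 + 2*M^6*(n:ℝ)*v*α^2 + (-4)*M^6*(n:ℝ)*v*α^3 + 2*M^6*(n:ℝ)^2*α^2 + (-7)*M^6*(n:ℝ)^2*α^3 + 11*M^6*(n:ℝ)^2*α^4 + (-2)*M^6*(n:ℝ)^2*v*α^2 + 4*M^6*(n:ℝ)^2*v*α^3 + 1*M^7*(n:ℝ)*v*α^2 + 2*M^7*(n:ℝ)*v*α^3 + 1*M^7*(n:ℝ)^2*α^2 + 3*M^7*(n:ℝ)^2*α^3 + (-11)*M^7*(n:ℝ)^2*α^4 + 4*M^7*(n:ℝ)^2*α^5 + (-1)*M^7*(n:ℝ)^2*v*α^2 + (-2)*M^7*(n:ℝ)^2*v*α^3 + (-1)*M^8*(n:ℝ)*v*α^2 + (-1)*M^8*(n:ℝ)^2*α^2 + 3*M^8*(n:ℝ)^2*α^3 + 1*M^8*(n:ℝ)^2*α^4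 + (-2)*M^8*(n:ℝ)^2*α^5 + 1*M^8*(n:ℝ)^2*v*α^2 + (-1)*M^9*(n:ℝ)^2*α^3 + 1*M^9*(n:ℝ)^2*α^4) * hroot' + (1*M^2*(n:ℝ)^2*v*α^3 + (-1)*M^2*(n:ℝ)^2*v*α^4 + (-1)*M^2*(n:ℝ)^3*α^3 + 1*M^2*(n:ℝ)^3*α^4 + (-1)*M^2*(n:ℝ)^3*v*α^3 + 1*M^2*(n:ℝ)^3*v*α^4 + 2*M^3*(n:ℝ)*v^2*α^3 + (-6)*M^3*(n:ℝ)^2*v*α^2 + 1*M^3*(n:ℝ)^2*v*α^2*L + 8*M^3*(n:ℝ)^2*v*α^3 + (-1)*M^3*(n:ℝ)^2*v*α^3*L + 2*M^3*(n:ℝ)^2*v*α^4 + (-4)*M^3*(n:ℝ)^2*v^2*α^3 + (-2)*M^3*(n:ℝ)^3*α^2 + (-1)*M^3*(n:ℝ)^3*α^2*L + 10*M^3*(n:ℝ)^3*α^3 + 1*M^3*(n:ℝ)^3*α^3*L + (-6)*M^3*(n:ℝ)^3*α^4 + 6*M^3*(n:ℝ)^3*v*α^2 + (-1)*M^3*(n:ℝ)^3*v*α^2*L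 + (-8)*M^3*(n:ℝ)^3*v*α^3 + 1*M^3*(n:ℝ)^3*v*α^3*L + (-2)*M^3*(n:ℝ)^3*v*α^4 + 2*M^3*(n:ℝ)^3*v^2*α^3 + (-6)*M^4*(n:ℝ)*v^2*α^3 + 10*M^4*(n:ℝ)^2*v*α^2 + (-23)*M^4*(n:ℝ)^2*v*α^3 + 2*M^4*(n:ℝ)^2*v*α^3*L + (-3)*M^4*(n:ℝ)^2*v*α^4 + 12*M^4*(n:ℝ)^2*v^2*α^3 + (-2)*M^4*(n:ℝ)^3*α^2 + 4*M^4*(n:ℝ)^3*α^2*L + (-19)*M^4*(n:ℝ)^3*α^3 + (-6)*M^4*(n:ℝ)^3*α^3*L + 11*M^4*(n:ℝ)^3*α^4 + (-10)*M^4*(n:ℝ)^3*v*α^2 + 23*M^4*(n:ℝ)^3*v*α^3 + (-2)*M^4*(n:ℝ)^3*v*α^3*L + 3*M^4*(n:ℝ)^3*v*α^4 + (-6)*M^4*(n:ℝ)^3*v^2*α^3 + 4*M^5*(n:ℝ)*v^2*α^3 + 4*M^5*(n:ℝ)^2*v*α^2 + (-3)*M^5*(n:ℝ)^2*v*α^2*L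 + 8*M^5*(n:ℝ)^2*v*α^3 + 1*M^5*(n:ℝ)^2*v*α^3*L + 12*M^5*(n:ℝ)^2*v*α^4 + (-8)*M^5*(n:ℝ)^2*v^2*α^3 + 20*M^5*(n:ℝ)^3*α^2 + (-5)*M^5*(n:ℝ)^3*α^2*L + 4*M^5*(n:ℝ)^3*α^3 + 15*M^5*(n:ℝ)^3*α^3*L + (-4)*M^5*(n:ℝ)^3*α^4 + (-4)*M^5*(n:ℝ)^3*v*α^2 + 3*M^5*(n:ℝ)^3*v*α^2*L + (-8)*M^5*(n:ℝ)^3*v*α^3 + (-1)*M^5*(n:ℝ)^3*v*α^3*L + (-12)*M^5*(n:ℝ)^3*v*α^4 + 4*M^5*(n:ℝ)^3*v^2*α^3 + 4*M^6*(n:ℝ)*v^2*α^3 + (-12)*M^6*(n:ℝ)^2*v*α^2 + 19*M^6*(n:ℝ)^2*v*α^3 + (-4)*M^6*(n:ℝ)^2*v*α^3*L + (-23)*M^6*(n:ℝ)^2*v*α^4 + (-8)*M^6*(n:ℝ)^2*v^2*α^3 + (-28)*M^6*(n:ℝ)^3*α^2 + 17*M^6*(n:ℝ)^3*α^3 + (-20)*M^6*(n:ℝ)^3*α^3*L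 + (-9)*M^6*(n:ℝ)^3*α^4 + 12*M^6*(n:ℝ)^3*v*α^2 + (-19)*M^6*(n:ℝ)^3*v*α^3 + 4*M^6*(n:ℝ)^3*v*α^3*L + 23*M^6*(n:ℝ)^3*v*α^4 + 4*M^6*(n:ℝ)^3*v^2*α^3 + (-6)*M^7*(n:ℝ)*v^2*α^3 + 2*M^7*(n:ℝ)^2*v*α^2 + 3*M^7*(n:ℝ)^2*v*α^2*L + (-16)*M^7*(n:ℝ)^2*v*α^3 + 1*M^7*(n:ℝ)^2*v*α^3*L + 18*M^7*(n:ℝ)^2*v*α^4 + 12*M^7*(n:ℝ)^2*v^2*α^3 + 14*M^7*(n:ℝ)^3*α^2 + 5*M^7*(n:ℝ)^3*α^2*L + (-14)*M^7*(n:ℝ)^3*α^3 + 15*M^7*(n:ℝ)^3*α^3*L + 10*M^7*(n:ℝ)^3*α^4 + (-2)*M^7*(n:ℝ)^3*v*α^2 + (-3)*M^7*(n:ℝ)^3*v*α^2*L + 16*M^7*(n:ℝ)^3*v*α^3 + (-1)*M^7*(n:ℝ)^3*v*α^3*L + (-18)*M^7*(n:ℝ)^3*v*α^4 + (-6)*M^7*(n:ℝ)^3*v^2*α^3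 + 2*M^8*(n:ℝ)*v^2*α^3 + 2*M^8*(n:ℝ)^2*v*α^2 + 3*M^8*(n:ℝ)^2*v*α^3 + 2*M^8*(n:ℝ)^2*v*α^3*L + (-5)*M^8*(n:ℝ)^2*v*α^4 + (-4)*M^8*(n:ℝ)^2*v^2*α^3 + (-2)*M^8*(n:ℝ)^3*α^2 + (-4)*M^8*(n:ℝ)^3*α^2*L + 3*M^8*(n:ℝ)^3*α^3 + (-6)*M^8*(n:ℝ)^3*α^3*L + (-3)*M^8*(n:ℝ)^3*α^4 + (-2)*M^8*(n:ℝ)^3*v*α^2 + (-3)*M^8*(n:ℝ)^3*v*α^3 + (-2)*M^8*(n:ℝ)^3*v*α^3*L + 5*M^8*(n:ℝ)^3*v*α^4 + 2*M^8*(n:ℝ)^3*v^2*α^3 + (-1)*M^9*(n:ℝ)^2*v*α^2*L + (-1)*M^9*(n:ℝ)^2*v*α^3*L + 1*M^9*(n:ℝ)^3*α^2*L + 1*M^9*(n:ℝ)^3*α^3*L + 1*M^9*(n:ℝ)^3*v*α^2*L + 1*M^9*(n:ℝ)^3*v*α^3*L) * hMl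
  have hqL : qquad M (n:ℝ) v α L < 0 := by
    have hpos : 0 < (M-1)^3*M^3*(n:ℝ)*α^2 :=
      mul_pos (mul_pos (mul_pos (pow_pos hM1 3) (pow_pos hM0 3)) hnpos) (pow_pos hα0 2)
    have h1 : 0 < M*(M-1)^2*(n:ℝ)^3*α^3 :=
      mul_pos (mul_pos (mul_pos hM0 (pow_pos hM1 2)) (pow_pos hnpos 3)) (pow_pos hα0 3)
    nlinarith [eqL, mul_pos (mul_pos h1 hT) (show (0:ℝ) < 1 - α by linarith), hpos]
  -- sign at the right endpoint
  have eqR : 4*M^2 * qquad M (n:ℝ) v α B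
      = (n:ℝ)*(M-1)^2*M*((1+α)*M+(1-α))*((n:ℝ)*(M-1)^2+((n:ℝ)-1)*v*(M+1)^2) := by
    simp only [qquad]
    linear_combination ((-1)*M*(n:ℝ)*v + 1*M*(n:ℝ)*v*α + 1*M*(n:ℝ)^2 + (-1)*M*(n:ℝ)^2*α + 1*M*(n:ℝ)^2*v + (-1)*M*(n:ℝ)^2*v*α + (-4)*M^2*v^2*α + 8*M^2*(n:ℝ)*v + (-2)*M^2*(n:ℝ)*v*B + (-14)*M^2*(n:ℝ)*v*α + 2*M^2*(n:ℝ)*v*α*B + 8*M^2*(n:ℝ)*v^2*α + 4*M^2*(n:ℝ)^2 + 2*M^2*(n:ℝ)^2*B + (-10)*M^2*(n:ℝ)^2*α + (-2)*M^2*(n:ℝ)^2*α*B + (-8)*M^2*(n:ℝ)^2*v + 2*M^2*(n:ℝ)^2*v*B + 14*M^2*(n:ℝ)^2*v*α + (-2)*M^2*(n:ℝ)^2*v*α*B + (-4)*M^2*(n:ℝ)^2*v^2*α + 10*M^3*(n:ℝ)*v + (-6)*M^3*(n:ℝ)*v*B + (-8)*M^3*(n:ℝ)*v*α + 2*M^3*(n:ℝ)*v*α*B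 + 8*M^3*(n:ℝ)*v*α^2 + 14*M^3*(n:ℝ)^2 + (-2)*M^3*(n:ℝ)^2*B + (-8)*M^3*(n:ℝ)^2*α + 6*M^3*(n:ℝ)^2*α*B + 8*M^3*(n:ℝ)^2*α^2 + (-10)*M^3*(n:ℝ)^2*v + 6*M^3*(n:ℝ)^2*v*B + 8*M^3*(n:ℝ)^2*v*α + (-2)*M^3*(n:ℝ)^2*v*α*B + (-8)*M^3*(n:ℝ)^2*v*α^2 + 4*M^4*v^2*α + (-6)*M^4*(n:ℝ)*v*B + 6*M^4*(n:ℝ)*v*α + (-2)*M^4*(n:ℝ)*v*α*B + (-8)*M^4*(n:ℝ)*v*α^2 + (-8)*M^4*(n:ℝ)*v^2*α + (-4)*M^4*(n:ℝ)^2 + (-2)*M^4*(n:ℝ)^2*B + 2*M^4*(n:ℝ)^2*α + (-6)*M^4*(n:ℝ)^2*α*B + (-8)*M^4*(n:ℝ)^2*α^2 + 6*M^4*(n:ℝ)^2*v*B + (-6)*M^4*(n:ℝ)^2*v*α + 2*M^4*(n:ℝ)^2*v*α*B + 8*M^4*(n:ℝ)^2*v*α^2 + 4*M^4*(n:ℝ)^2*v^2*α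 + (-1)*M^5*(n:ℝ)*v + (-2)*M^5*(n:ℝ)*v*B + (-1)*M^5*(n:ℝ)*v*α + (-2)*M^5*(n:ℝ)*v*α*B + 1*M^5*(n:ℝ)^2 + 2*M^5*(n:ℝ)^2*B + 1*M^5*(n:ℝ)^2*α + 2*M^5*(n:ℝ)^2*α*B + 1*M^5*(n:ℝ)^2*v + 2*M^5*(n:ℝ)^2*v*B + 1*M^5*(n:ℝ)^2*v*α + 2*M^5*(n:ℝ)^2*v*α*B) * hB
  have hqR : 0 < qquad M (n:ℝ) v α B := by
    have h1 : 0 < (1+α)*M+(1-α) := by nlinarith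
    have h2 : 0 < (n:ℝ)*(M-1)^2+((n:ℝ)-1)*v*(M+1)^2 := by
      nlinarith [mul_nonneg (mul_nonneg (show (0:ℝ) ≤ (n:ℝ)-1 by linarith) hv) (sq_nonneg (M+1)),
        mul_pos hnpos (pow_pos (show (0:ℝ) < M-1 by linarith) 2)]
    have hr : 0 < (n:ℝ)*(M-1)^2*M*((1+α)*M+(1-α))*((n:ℝ)*(M-1)^2+((n:ℝ)-1)*v*(M+1)^2) :=
      mul_pos (mul_pos (mul_pos (mul_pos hnpos (pow_pos (show (0:ℝ) < M-1 by linarith) 2)) hM0) h1) h2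
    nlinarith [eqR, hr, show (0:ℝ) < 4*M^2 by positivity]
  -- existence by the intermediate value theorem
  have hcont : ContinuousOn (fun x => qquad M (n:ℝ) v α x) (Set.Icc L B) := by
    apply Continuous.continuousOn
    unfold qquad
    fun_prop
  obtain ⟨β, hβmem, hβval⟩ :=
    intermediate_value_Ioo (le_of_lt hLB) hcont (Set.mem_Ioo.mpr ⟨hqL, hqR⟩)
  -- leading coefficient is positive
  have hc1 : 0 < M*(n:ℝ)*((M-1)^2*(n:ℝ)+(M+1)^2*((n:ℝ)-1)*v)*((M-1)*α+(M+1)) := by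
    have h2 : 0 < (M-1)^2*(n:ℝ)+(M+1)^2*((n:ℝ)-1)*v := by
      nlinarith [mul_nonneg (mul_nonneg (sq_nonneg (M+1)) (show (0:ℝ) ≤ (n:ℝ)-1 by linarith)) hv,
        mul_pos (pow_pos (show (0:ℝ) < M-1 by linarith) 2) hnpos]
    have h3 : 0 < (M-1)*α+(M+1) := by nlinarith [mul_pos (show (0:ℝ) < M-1 by linarith) hα0]
    exact mul_pos (mul_pos (mul_pos hM0 hnpos) h2) h3
  refine ⟨β, ⟨hβmem, hβval⟩, ?_⟩
  rintro y ⟨hymem, hyval⟩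
  by_contra hne
  have hsub : (y - β) * ((M*(n:ℝ)*((M-1)^2*(n:ℝ)+(M+1)^2*((n:ℝ)-1)*v)*((M-1)*α+(M+1)))*(y+β) + 2*M*(2*(M-1)*M*(n:ℝ)*(((n:ℝ)-1)*v-(n:ℝ))*α^2 + (M+1)*(((n:ℝ)-1)*v-(n:ℝ))*((3-M)*(n:ℝ)+(M-1)*((n:ℝ)-1)*v)*α + (n:ℝ)*((n:ℝ)-(M-4)*M*(n:ℝ)-(M+1)*(M+3)*((n:ℝ)-1)*v))) = 0 := by
    have h1 := hyval
    have h2 := hβval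
    simp only [qquad] at h1 h2
    linear_combination h1 - h2
  have h3 : (M*(n:ℝ)*((M-1)^2*(n:ℝ)+(M+1)^2*((n:ℝ)-1)*v)*((M-1)*α+(M+1)))*(y+β) + 2*M*(2*(M-1)*M*(n:ℝ)*(((n:ℝ)-1)*v-(n:ℝ))*α^2 + (M+1)*(((n:ℝ)-1)*v-(n:ℝ))*((3-M)*(n:ℝ)+(M-1)*((n:ℝ)-1)*v)*α + (n:ℝ)*((n:ℝ)-(M-4)*M*(n:ℝ)-(M+1)*(M+3)*((n:ℝ)-1)*v)) = 0 := by
    rcases mul_eq_zero.mp hsub with h | h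
    · exact absurd (sub_eq_zero.mp h) hne
    · exact h
  have hfin : qquad M (n:ℝ) v α L = (M*(n:ℝ)*((M-1)^2*(n:ℝ)+(M+1)^2*((n:ℝ)-1)*v)*((M-1)*α+(M+1))) * ((L-y)*(L-β)) := by
    have h1 := hyval
    simp only [qquad] at h1 ⊢
    linear_combination L * h3 + h1 - y * h3
  have hpos2 : 0 < (M*(n:ℝ)*((M-1)^2*(n:ℝ)+(M+1)^2*((n:ℝ)-1)*v)*((M-1)*α+(M+1))) * ((L-y)*(L-β)) :=
    mul_pos hc1 (mul_pos_of_neg_of_neg (by linarith [hymem.1]) (by linarith [hβmem.1]))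
  linarith [hfin, hqL, hpos2]
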